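/- Let A be a finite-dimensional algebra over a field F with a non-degenerate trace tr : A → F (i.e. tr(ab) = tr(ba) and for every a ≠ 0 there is b with tr(ab) ≠ 0). If tr vanishes on all nilpotent elements of A, then A is semisimple. -/
import Mathlib

/-- In a finite-dimensional algebra over a field, every element of the Jacobson radical
is nilpotent. -/
lemma aux_nilpotent_of_mem_jacobson
    (F A : Type*) [Field F] [Ring A] [Algebra F A] [FiniteDimensional F A]
    {y : A} (hy : y ∈ Ideal.jacobson (⊥ : Ideal A)) : IsNilpotent y := by
  -- the ranges of right multiplication by y^n form a descending chain of F-subspaces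
  set g : ℕ → ℕ := fun n => Module.finrank F (LinearMap.range (LinearMap.mulRight F (y ^ n)))
    with hg
  have hle : ∀ n : ℕ, LinearMap.range (LinearMap.mulRight F (y ^ (n + 1)))
      ≤ LinearMap.range (LinearMap.mulRight F (y ^ n)) := by
    intro n z hz
    obtain ⟨a, rfl⟩ := hz
    exact ⟨a * y, by simp [pow_succ', mul_assoc]⟩
  have hanti : ∀ n : ℕ, g (n + 1) ≤ g n := fun n =>
    Submodule.finrank_mono (hle n)
  -- there is n with equal ranks, hence equal ranges
  have hstab : ∃ n : ℕ, g (n + 1) = g n := by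
    by_contra h
    push_neg at h
    have hlt : ∀ n : ℕ, g (n + 1) < g n := fun n => lt_of_le_of_ne (hanti n) (h n)
    have hbound : ∀ n : ℕ, g n + n ≤ g 0 := by
      intro n
      induction n with
      | zero => simp
      | succ k ih =>
        have := hlt k
        omega
    have := hbound (g 0 + 1)
    omega
  obtain ⟨n, hn⟩ := hstab
  have heq : LinearMap.range (LinearMap.mulRight F (y ^ (n + 1)))
      = LinearMap.range (LinearMap.mulRight F (y ^ n)) :=
    Submodule.eq_of_le_of_finrank_eq (hle n) hn
  have hmem : y ^ n ∈ LinearMap.range (LinearMap.mulRight F (y ^ (n + 1))) := by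
    rw [heq]
    exact ⟨1, by simp⟩
  obtain ⟨a, ha⟩ := hmem
  simp only [LinearMap.mulRight_apply] at ha
  -- (1 - a*y) * y^n = 0 and 1 - a*y has a left inverse
  have hkey : (1 - a * y) * y ^ n = 0 := by
    rw [sub_mul, one_mul, mul_assoc, ← pow_succ', ha, sub_self]
  obtain ⟨z, hz⟩ := Ideal.mem_jacobson_iff.mp hy (-a)
  rw [Submodule.mem_bot, sub_eq_zero] at hz
  have hz' : z * (1 - a * y) = 1 := by
    rw [mul_sub, mul_one]
    calc z - z * (a * y) = z * -a * y + z := by noncomm_ring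
    _ = 1 := hz
  refine ⟨n, ?_⟩
  calc y ^ n = (z * (1 - a * y)) * y ^ n := by rw [hz', one_mul]
  _ = z * ((1 - a * y) * y ^ n) := by rw [mul_assoc]
  _ = 0 := by rw [hkey, mul_zero]

/-- A finite-dimensional algebra over a field with a non-degenerate trace that vanishes
on nilpotent elements is semisimple (its Jacobson radical is zero). -/
theorem nondegenerate_trace_vanishing_on_nilpotents_semisimple
    (F A : Type*) [Field F] [Ring A] [Algebra F A] [FiniteDimensional F A]
    (tr : A →ₗ[F] F)
    (htr : ∀ a b : A, tr (a * b) = tr (b * a))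
    (hnd : ∀ a : A, a ≠ 0 → ∃ b : A, tr (a * b) ≠ 0)
    (hnil : ∀ a : A, IsNilpotent a → tr a = 0) :
    Ideal.jacobson (⊥ : Ideal A) = ⊥ := by
  rw [eq_bot_iff]
  intro x hx
  rw [Submodule.mem_bot]
  by_contra hx0
  obtain ⟨b, hb⟩ := hnd x hx0
  apply hb
  rw [htr]
  apply hnil
  exact aux_nilpotent_of_mem_jacobson F A
    (Ideal.mul_mem_left _ b hx)
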